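/- Let p be a prime and let a finite group G act by automorphisms on a finite abelian group V. Then the stabilizer C_G(v) = {g ∈ G : g·v = v} is a p-group for every nonidentity element v ∈ V if and only if, for every nontrivial group homomorphism α : V → ℂˣ, the inertia group I_G(α) = {g ∈ G : α(g·v) = α(v) for all v ∈ V} is a p-group. -/
import Mathlib


/-- The inertia subgroup of a character `α : V →* ℂˣ` under an action of `G` on `V`
by automorphisms: the set of `g ∈ G` with `α (g • v) = α v` for all `v`. -/
def inertia (G : Type*) {V : Type*} [Group G] [CommGroup V] [MulDistribMulAction G V]
    (α : V →* ℂˣ) : Subgroup G where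
  carrier := {g : G | ∀ v : V, α (g • v) = α v}
  one_mem' := by intro v; simp
  mul_mem' := by
    intro g h hg hh v
    rw [mul_smul, hg, hh]
  inv_mem' := by
    intro g hg v
    have := hg (g⁻¹ • v)
    rw [smul_inv_smul] at this
    exact this.symm

/-- The "difference" endomorphism `v ↦ v⁻¹ * g • v`. -/
def diffHom {G V : Type*} [Group G] [CommGroup V] [MulDistribMulAction G V] (g : G) :
    V →* V where
  toFun v := v⁻¹ * g • v
  map_one' := by simp
  map_mul' a b := by
    simp only [mul_inv_rev, smul_mul']
    simp [mul_assoc, mul_comm, mul_left_comm]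

lemma key_equiv {G V : Type*} [Group G] [CommGroup V] [Finite V]
    [MulDistribMulAction G V] (g : G) :
    (∃ v : V, v ≠ 1 ∧ g • v = v) ↔
      (∃ α : V →* ℂˣ, α ≠ 1 ∧ ∀ v, α (g • v) = α v) := by
  have hφ : ∀ v : V, diffHom (V := V) g v = 1 ↔ g • v = v := by
    intro v
    simp [diffHom, inv_mul_eq_one, eq_comm]
  constructor
  · rintro ⟨v, hv, hfix⟩
    -- φ is not injective, hence not surjective
    have hninj : ¬ Function.Injective (diffHom (V := V) g) := by
      intro hinj
      exact hv (hinj (a₁ := v) (a₂ := 1) (by simp [(hφ v).mpr hfix]))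
    have hnsurj : ¬ Function.Surjective (diffHom (V := V) g) := by
      rwa [← Finite.injective_iff_surjective]
    obtain ⟨w, hw⟩ := not_forall.mp hnsurj
    have hwmem : w ∉ (diffHom (V := V) g).range := by
      simpa [MonoidHom.mem_range, eq_comm] using hw
    set H := (diffHom (V := V) g).range with hH
    -- build a nontrivial character of V ⧸ H
    haveI : NeZero ((Monoid.exponent (V ⧸ H) : ℂ)) :=
      ⟨by exact_mod_cast Monoid.exponent_ne_zero_of_finite (G := V ⧸ H)⟩
    have hbar : (QuotientGroup.mk' H) w ≠ 1 := by
      simpa [QuotientGroup.eq_one_iff] using hwmem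
    obtain ⟨ψ, hψ⟩ := CommGroup.exists_apply_ne_one_of_hasEnoughRootsOfUnity (V ⧸ H) ℂ hbar
    refine ⟨ψ.comp (QuotientGroup.mk' H), ?_, ?_⟩
    · intro h1
      apply hψ
      have := DFunLike.congr_fun h1 w
      simpa using this
    · intro v
      have hmem : diffHom (V := V) g v ∈ H := ⟨v, rfl⟩
      have : g • v = v * diffHom (V := V) g v := by
        simp [diffHom]
      rw [this]
      simp only [MonoidHom.comp_apply, map_mul]
      have : (QuotientGroup.mk' H) (diffHom (V := V) g v) = 1 := by
        simpa [QuotientGroup.eq_one_iff] using hmem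
      rw [this, map_one, mul_one]
  · rintro ⟨α, hα, hinv⟩
    by_contra hno
    push_neg at hno
    -- φ is injective
    have hinj : Function.Injective (diffHom (V := V) g) := by
      rw [injective_iff_map_eq_one]
      intro v hv
      rw [hφ v] at hv
      by_contra hv1
      exact hno v hv1 hv
    have hsurj : Function.Surjective (diffHom (V := V) g) :=
      (Finite.injective_iff_surjective).mp hinj
    -- α kills the range of φ, hence α = 1
    apply hα
    ext w
    obtain ⟨v, rfl⟩ := hsurj w
    have : α (diffHom (V := V) g v) = α v⁻¹ * α (g • v) := by
      simp [diffHom]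
    rw [this, hinv v, map_inv, inv_mul_cancel]
    rfl

/-- Let a finite group `G` act by automorphisms on a finite abelian group `V` and let `p`
be a prime.  The centralizer (stabilizer) of every nonidentity `v ∈ V` is a `p`-group if
and only if the inertia group of every nontrivial homomorphism `α : V →* ℂˣ` is a
`p`-group. -/
theorem stabilizers_pGroups_iff_inertia_pGroups
    {G V : Type*} [Group G] [Finite G] [CommGroup V] [Finite V]
    [MulDistribMulAction G V] (p : ℕ) (hp : p.Prime) :
    (∀ v : V, v ≠ 1 → IsPGroup p (MulAction.stabilizer G v)) ↔
      (∀ α : V →* ℂˣ, α ≠ 1 → IsPGroup p (inertia G α)) := by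
  constructor
  · intro h α hα
    rintro ⟨g, hg⟩
    obtain ⟨v, hv, hfix⟩ := (key_equiv (V := V) g).mpr ⟨α, hα, hg⟩
    have hmem : g ∈ MulAction.stabilizer G v := hfix
    obtain ⟨k, hk⟩ := h v hv ⟨g, hmem⟩
    refine ⟨k, ?_⟩
    have hg1 : g ^ p ^ k = 1 := by
      simpa using congrArg Subtype.val hk
    exact Subtype.ext (by simpa using hg1)
  · intro h v hv
    rintro ⟨g, hg⟩
    have hfix : g • v = v := hg
    obtain ⟨α, hα, hi⟩ := (key_equiv (V := V) g).mp ⟨v, hv, hfix⟩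
    obtain ⟨k, hk⟩ := h α hα ⟨g, hi⟩
    refine ⟨k, ?_⟩
    have hg1 : g ^ p ^ k = 1 := by
      simpa using congrArg Subtype.val hk
    exact Subtype.ext (by simpa using hg1)
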